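/- arXiv:math/0405372 — 7 statements merged into one kernel-verified Lean document; each statement's English description precedes it below -/
import Mathlib

section
/- For every n ∈ ℤ there exists k ∈ ℕ such that (S*)^k e_n belongs to L = span{e_k : −2D+1 ≤ k ≤ 0}. -/
open ContinuousLinearMap

private lemma lp_eq_sum_single (ξ : lp (fun _ : ℤ => ℂ) 2) (F : Finset ℤ)
    (h : ∀ m ∉ F, (ξ : ∀ _ : ℤ, ℂ) m = 0) :
    ξ = ∑ m ∈ F, (ξ : ∀ _ : ℤ, ℂ) m • lp.single 2 m (1 : ℂ) := by
  apply lp.ext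
  funext j
  rw [lp.coeFn_sum]
  simp only [Finset.sum_apply, lp.coeFn_smul, Pi.smul_apply, lp.single_apply, smul_eq_mul]
  by_cases hj : j ∈ F
  · rw [Finset.sum_eq_single j]
    · simp
    · intro b _ hbj
      rw [Pi.single_eq_of_ne hbj.symm]
      ring
    · intro hjF; exact absurd hj hjF
  · rw [h j hj, Finset.sum_eq_zero]
    intro b hb
    rw [Pi.single_eq_of_ne (show j ≠ b by rintro rfl; exact hj hb)]
    ring

/-- For the operator `S` on `ℓ²(ℤ)` with `(Sξ)_n = ∑_k a_{n−2k} ξ_k`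
(whose adjoint is `(S*ξ)_n = ∑_k conj(a_{k−2n}) ξ_k`), for every `n ∈ ℤ` there is a
`k ∈ ℕ` with `(S*)^k e_n ∈ L = span{e_j : −2D+1 ≤ j ≤ 0}`. -/
theorem cuntz_wavelet_stmt5 (D : ℕ) (hD : 1 ≤ D) (a : ℤ → ℂ)
    (ha : ∀ j : ℤ, j < 0 ∨ (2 * D : ℤ) ≤ j → a j = 0)
    (S : lp (fun _ : ℤ => ℂ) 2 →L[ℂ] lp (fun _ : ℤ => ℂ) 2)
    (hS : ∀ (ξ : lp (fun _ : ℤ => ℂ) 2) (n : ℤ),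
      (S ξ : ∀ _ : ℤ, ℂ) n = ∑' k : ℤ, a (n - 2 * k) * (ξ : ∀ _ : ℤ, ℂ) k)
    (hSadj : ∀ (ξ : lp (fun _ : ℤ => ℂ) 2) (n : ℤ),
      (adjoint S ξ : ∀ _ : ℤ, ℂ) n =
        ∑' k : ℤ, (starRingEnd ℂ) (a (k - 2 * n)) * (ξ : ∀ _ : ℤ, ℂ) k) :
    ∀ n : ℤ, ∃ k : ℕ,
      ((adjoint S) ^ k) (lp.single 2 n (1 : ℂ)) ∈ Submodule.span ℂ
        ((fun j : ℤ => lp.single 2 j (1 : ℂ)) '' Set.Icc (-(2 * (D : ℤ)) + 1) 0) := by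
  classical
  set A := adjoint S with hA
  set e : ℤ → lp (fun _ : ℤ => ℂ) 2 := fun j => lp.single 2 j (1 : ℂ) with he
  set L : Submodule ℂ (lp (fun _ : ℤ => ℂ) 2) :=
    Submodule.span ℂ (e '' Set.Icc (-(2 * (D : ℤ)) + 1) 0) with hLdef
  -- coordinates of A e_n
  have hcoord : ∀ n m : ℤ, (A (e n) : ∀ _ : ℤ, ℂ) m = (starRingEnd ℂ) (a (n - 2 * m)) := by
    intro n m
    rw [hSadj (e n) m]
    rw [tsum_eq_single n]
    · rw [he]; simp [lp.single_apply_self]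
    · intro b hb
      rw [he]; simp only
      rw [lp.single_apply_ne 2 n _ hb, mul_zero]
  -- the support finset
  set F : ℤ → Finset ℤ := fun n =>
    (Finset.Icc ((n - 2 * (D : ℤ) + 1) / 2) (n / 2)).filter
      (fun m => n - 2 * (D : ℤ) + 1 ≤ 2 * m ∧ 2 * m ≤ n) with hF
  have hFmem : ∀ n m : ℤ, m ∈ F n ↔ (n - 2 * (D : ℤ) + 1 ≤ 2 * m ∧ 2 * m ≤ n) := by
    intro n m
    rw [hF]
    simp only [Finset.mem_filter, Finset.mem_Icc]
    constructor
    · rintro ⟨_, h2⟩; exact h2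
    · intro h2; exact ⟨by omega, h2⟩
  -- A e_n as a finite sum
  have hstep : ∀ n : ℤ,
      A (e n) = ∑ m ∈ F n, (starRingEnd ℂ) (a (n - 2 * m)) • e m := by
    intro n
    have := lp_eq_sum_single (A (e n)) (F n) (by
      intro m hm
      rw [hcoord n m]
      have : a (n - 2 * m) = 0 := by
        apply ha
        rw [hFmem] at hm
        omega
      rw [this, map_zero])
    rw [this]
    apply Finset.sum_congr rfl
    intro m _
    rw [hcoord n m]
  -- membership of basic vectors
  have hmemL : ∀ j : ℤ, -(2 * (D : ℤ)) + 1 ≤ j → j ≤ 0 → e j ∈ L := by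
    intro j h1 h2
    apply Submodule.subset_span
    exact ⟨j, ⟨h1, h2⟩, rfl⟩
  -- invariance of L under A
  have hinv : ∀ x ∈ L, A x ∈ L := by
    intro x hx
    induction hx using Submodule.span_induction with
    | mem g hg =>
      obtain ⟨j, ⟨hj1, hj2⟩, rfl⟩ := hg
      rw [hstep j]
      apply Submodule.sum_mem
      intro m hm
      apply Submodule.smul_mem
      rw [hFmem] at hm
      exact hmemL m (by omega) (by omega)
    | zero => rw [map_zero]; exact Submodule.zero_mem L
    | add y z _ _ hy hz => rw [map_add]; exact Submodule.add_mem L hy hz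
    | smul c y _ hy => rw [map_smul]; exact Submodule.smul_mem L c hy
  have hinvk : ∀ (k : ℕ) (x : lp (fun _ : ℤ => ℂ) 2), x ∈ L → (A ^ k) x ∈ L := by
    intro k
    induction k with
    | zero => intro x hx; simpa using hx
    | succ k ih =>
      intro x hx
      rw [pow_succ, ContinuousLinearMap.mul_apply]
      exact ih _ (hinv x hx)
  -- the measure
  set μ : ℤ → ℕ := fun n => n.toNat + (1 - 2 * (D : ℤ) - n).toNat with hμ
  suffices H : ∀ N : ℕ, ∀ n : ℤ, μ n ≤ N → ∃ k : ℕ, (A ^ k) (e n) ∈ L by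
    intro n; exact H (μ n) n le_rfl
  intro N
  induction N with
  | zero =>
    intro n hn
    refine ⟨0, ?_⟩
    simp only [pow_zero, one_apply]
    exact hmemL n (by simp only [hμ] at hn; omega) (by simp only [hμ] at hn; omega)
  | succ N ih =>
    intro n hn
    by_cases hn0 : -(2 * (D : ℤ)) + 1 ≤ n ∧ n ≤ 0
    · exact ⟨0, by simp only [pow_zero, one_apply]; exact hmemL n hn0.1 hn0.2⟩
    · -- each m in F n has μ m < μ n
      have hmeas : ∀ m ∈ F n, μ m ≤ N := by
        intro m hm
        rw [hFmem] at hm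
        simp only [hμ] at hn ⊢
        omega
      have hex : ∀ m : ℤ, ∃ k : ℕ, m ∈ F n → (A ^ k) (e m) ∈ L := by
        intro m
        by_cases hm : m ∈ F n
        · obtain ⟨k, hk⟩ := ih m (hmeas m hm)
          exact ⟨k, fun _ => hk⟩
        · exact ⟨0, fun h => absurd h hm⟩
      choose f hf using hex
      set K : ℕ := (F n).sup f with hK
      have hKmem : ∀ m ∈ F n, (A ^ K) (e m) ∈ L := by
        intro m hm
        have h1 : f m ≤ K := Finset.le_sup hm
        have : K = (K - f m) + f m := by omega
        rw [this, pow_add, ContinuousLinearMap.mul_apply]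
        exact hinvk _ _ (hf m hm)
      refine ⟨K + 1, ?_⟩
      rw [pow_succ, ContinuousLinearMap.mul_apply, hstep n, map_sum]
      apply Submodule.sum_mem
      intro m hm
      rw [map_smul]
      exact Submodule.smul_mem L _ (hKmem m hm)
end

section
/- For every k ≥ 1 and every (i_1,…,i_k) ∈ {0,1}^k, the inequality ‖S_{i_k}*⋯S_{i_1}* e_0‖² ≥ |a_0|^{2·#{j : i_j = 0}} · |a_{2D−1}|^{2·#{j : i_j = 1}} holds, where e_0 is the constant function 1 in L²(T). Equivalently, the measure μ_0 with μ_0([ξ, ξ+2^{−k})) = ‖S_{i_k}*⋯S_{i_1}* e_0‖², ξ = i_1/2 + ⋯ + i_k/2^k, satisfies μ_0([ξ, ξ+2^{−k})) ≥ |a_0|^{2·#{j : i_j = 0}} · |a_{2D−1}|^{2·#{j : i_j = 1}}. -/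
open Complex Finset MeasureTheory AddCircle ContinuousLinearMap

/-- The word `S_{i_1} ⋯ S_{i_k}` (leftmost factor `S_{i_1}`); its adjoint is
`S_{i_k}* ⋯ S_{i_1}*`. -/
noncomputable def cuntzWord {H : Type*} [NormedAddCommGroup H] [InnerProductSpace ℂ H]
    (S : Fin 2 → H →L[ℂ] H) {k : ℕ} (i : Fin k → Fin 2) : H →L[ℂ] H :=
  ((List.ofFn i).map S).prod

/-- The dyadic rational `ξ = i₁/2 + ⋯ + i_k/2^k`. -/
noncomputable def dyadicVal {k : ℕ} (i : Fin k → Fin 2) : ℝ :=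
  ∑ j : Fin k, ((i j : ℕ) : ℝ) * (2⁻¹ : ℝ) ^ ((j : ℕ) + 1)

section Aux

lemma cuntzAux_fourier_double {n : ℤ} {z : AddCircle (1:ℝ)} :
    fourier n (z + z) = fourier (2 * n) z := by
  rw [two_mul, fourier_add]
  simp [fourier_apply, smul_add, AddCircle.toCircle_add]

lemma cuntzAux_integrable_fourier (n : ℤ) :
    Integrable (fun z : AddCircle (1:ℝ) => (fourier n z : ℂ)) haarAddCircle :=
  (fourier n).continuous.integrable_of_hasCompactSupport (HasCompactSupport.of_compactSpace _)

lemma cuntzAux_integral_fourier (n : ℤ) :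
    ∫ z : AddCircle (1:ℝ), fourier n z ∂haarAddCircle = if n = 0 then 1 else 0 := by
  split_ifs with h
  · subst h
    have : (fun z : AddCircle (1:ℝ) => (fourier 0 z : ℂ)) = fun _ => 1 := by
      funext z; exact fourier_zero
    rw [this, integral_const, probReal_univ, one_smul]
  · exact integral_eq_zero_of_add_right_eq_neg (fourier_add_half_inv_index h one_pos)

lemma cuntzAux_doubling : MeasurePreserving (fun z : AddCircle (1:ℝ) => z + z)
    haarAddCircle haarAddCircle := by
  have := Measure.measurePreserving_zsmul (@haarAddCircle (1:ℝ) _) (two_ne_zero (α := ℤ))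
  simpa [two_zsmul] using this

end Aux

/-- Under the quadrature condition (Q) and the normalization
`∑ a_k = √2`, for every `k ≥ 1` and digits `i₁,…,i_k ∈ {0,1}` one has
`‖S_{i_k}*⋯S_{i_1}* e₀‖² ≥ |a₀|^{2 N₀} |a_{2D−1}|^{2 N₁}` where `e₀` is the constant
function `1` in `L²(T)` and `N_j = #{l : i_l = j}`; equivalently, any measure `μ₀`
with `μ₀([ξ, ξ+2^{−k})) = ‖S_{i_k}*⋯S_{i_1}* e₀‖²` obeys the same lower bound. -/
theorem cuntz_wavelet_stmt11 (D : ℕ) (hD : 1 ≤ D) (a : ℤ → ℂ)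
    (ha : ∀ j : ℤ, j < 0 ∨ (2 * D : ℤ) ≤ j → a j = 0)
    (hQ : ∀ ℓ : ℤ, ∑ k ∈ Finset.Icc (0 : ℤ) (2 * D - 1),
        (starRingEnd ℂ) (a k) * a (k + 2 * ℓ) = if ℓ = 0 then 1 else 0)
    (hnorm : ∑ k ∈ Finset.Icc (0 : ℤ) (2 * D - 1), a k = (Real.sqrt 2 : ℂ))
    (m : Fin 2 → AddCircle (1 : ℝ) → ℂ)
    (hm₀ : ∀ z, m 0 z = ∑ k ∈ Finset.range (2 * D), a k * fourier (k : ℤ) z)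
    (hm₁ : ∀ z, m 1 z = ∑ k ∈ Finset.range (2 * D),
        (-1 : ℂ) ^ k * (starRingEnd ℂ) (a (2 * (D : ℤ) - 1 - k)) * fourier (k : ℤ) z)
    (S : Fin 2 → Lp ℂ 2 (@haarAddCircle (1 : ℝ) _) →L[ℂ] Lp ℂ 2 (@haarAddCircle (1 : ℝ) _))
    (hS : ∀ (i : Fin 2) (f : Lp ℂ 2 (@haarAddCircle (1 : ℝ) _)),
      ⇑(S i f) =ᵐ[@haarAddCircle (1 : ℝ) _] fun z => m i z * f (z + z))
    (e₀ : Lp ℂ 2 (@haarAddCircle (1 : ℝ) _))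
    (he₀ : ⇑e₀ =ᵐ[@haarAddCircle (1 : ℝ) _] fun _ => (1 : ℂ)) :
    (∀ (k : ℕ), 1 ≤ k → ∀ i : Fin k → Fin 2,
      ‖a 0‖ ^ (2 * (Finset.univ.filter fun l => i l = 0).card) *
        ‖a (2 * (D : ℤ) - 1)‖ ^ (2 * (Finset.univ.filter fun l => i l = 1).card)
        ≤ ‖adjoint (cuntzWord S i) e₀‖ ^ 2) ∧
    (∀ μ₀ : Measure ℝ,
      (∀ (k : ℕ), 1 ≤ k → ∀ i : Fin k → Fin 2,
        μ₀ (Set.Ico (dyadicVal i) (dyadicVal i + (2⁻¹ : ℝ) ^ k)) =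
          ENNReal.ofReal (‖adjoint (cuntzWord S i) e₀‖ ^ 2)) →
      ∀ (k : ℕ), 1 ≤ k → ∀ i : Fin k → Fin 2,
        ENNReal.ofReal
            (‖a 0‖ ^ (2 * (Finset.univ.filter fun l => i l = 0).card) *
              ‖a (2 * (D : ℤ) - 1)‖ ^
                (2 * (Finset.univ.filter fun l => i l = 1).card))
          ≤ μ₀ (Set.Ico (dyadicVal i) (dyadicVal i + (2⁻¹ : ℝ) ^ k))) := by
  classical
  -- the Fourier coefficients of `m i`
  set c : Fin 2 → ℕ → ℂ :=
    ![fun k => a k, fun k => (-1 : ℂ) ^ k * (starRingEnd ℂ) (a (2 * (D : ℤ) - 1 - k))] with hc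
  have hm : ∀ (i : Fin 2) (z : AddCircle (1:ℝ)),
      m i z = ∑ k ∈ Finset.range (2 * D), c i k * fourier (k : ℤ) z := by
    intro i z
    fin_cases i
    · show m 0 z = ∑ k ∈ Finset.range (2 * D), c 0 k * fourier (k : ℤ) z
      rw [hm₀]; simp [hc]
    · show m 1 z = ∑ k ∈ Finset.range (2 * D), c 1 k * fourier (k : ℤ) z
      rw [hm₁]; simp [hc]
  have hc00 : c 0 0 = a 0 := by simp [hc]
  have hc10 : c 1 0 = (starRingEnd ℂ) (a (2 * (D : ℤ) - 1)) := by simp [hc]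
  -- key induction: the iterated image of `e₀` is an analytic trigonometric polynomial
  -- whose constant coefficient is the product of the constant coefficients of the `m i`'s
  have key : ∀ L : List (Fin 2), ∃ N : ℕ, 0 < N ∧ ∃ b : ℕ → ℂ,
      b 0 = (L.map fun j => c j 0).prod ∧
      (⇑(((L.map S).prod) e₀) =ᵐ[@haarAddCircle (1:ℝ) _]
        fun z => ∑ n ∈ Finset.range N, b n * fourier (n : ℤ) z) := by
    intro L
    induction L with
    | nil =>
      refine ⟨1, one_pos, fun n => if n = 0 then 1 else 0, by simp, ?_⟩
      have h1 : (fun z : AddCircle (1:ℝ) =>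
          ∑ n ∈ Finset.range 1, (if n = 0 then (1:ℂ) else 0) * fourier (n : ℤ) z)
          = fun _ => (1 : ℂ) := by
        funext z
        simp [fourier_zero]
      rw [List.map_nil, List.prod_nil, h1]
      simpa using he₀
    | cons i L ih =>
      obtain ⟨N, hN, b, hb0, hae⟩ := ih
      set f : Lp ℂ 2 (@haarAddCircle (1:ℝ) _) := ((L.map S).prod) e₀ with hf
      -- compose the a.e. identity with the doubling map
      have hcomp : (fun z : AddCircle (1:ℝ) => f (z + z)) =ᵐ[@haarAddCircle (1:ℝ) _]
          fun z => ∑ n ∈ Finset.range N, b n * fourier (n : ℤ) (z + z) := by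
        have := cuntzAux_doubling.quasiMeasurePreserving.ae_eq_comp hae
        simpa [Function.comp_def] using this
      have hmain : ⇑((S i) f) =ᵐ[@haarAddCircle (1:ℝ) _] fun z =>
          (∑ k ∈ Finset.range (2 * D), c i k * fourier (k : ℤ) z) *
          (∑ n ∈ Finset.range N, b n * fourier (2 * (n : ℤ)) z) := by
        refine (hS i f).trans ?_
        filter_upwards [hcomp] with z hz
        rw [hm i, hz]
        simp only [cuntzAux_fourier_double]
      -- the new coefficients
      set b' : ℕ → ℂ := fun M =>
        ∑ p ∈ (Finset.range (2 * D) ×ˢ Finset.range N).filter (fun p => p.1 + 2 * p.2 = M),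
          c i p.1 * b p.2 with hb'
      have hmaps : ∀ p ∈ Finset.range (2 * D) ×ˢ Finset.range N,
          p.1 + 2 * p.2 ∈ Finset.range (2 * D + 2 * N) := by
        intro p hp
        rw [Finset.mem_product, Finset.mem_range, Finset.mem_range] at hp
        rw [Finset.mem_range]
        omega
      have hfun : (fun z : AddCircle (1:ℝ) =>
          (∑ k ∈ Finset.range (2 * D), c i k * fourier (k : ℤ) z) *
          (∑ n ∈ Finset.range N, b n * fourier (2 * (n : ℤ)) z))
          = fun z => ∑ M ∈ Finset.range (2 * D + 2 * N), b' M * fourier (M : ℤ) z := by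
        funext z
        rw [Finset.sum_mul_sum]
        rw [← Finset.sum_product' (f := fun k n =>
          (c i k * fourier (k : ℤ) z) * (b n * fourier (2 * (n : ℤ)) z))]
        rw [← Finset.sum_fiberwise_of_maps_to hmaps (fun p =>
          (c i p.1 * fourier (p.1 : ℤ) z) * (b p.2 * fourier (2 * (p.2 : ℤ)) z))]
        refine Finset.sum_congr rfl fun M _ => ?_
        rw [hb', Finset.sum_mul]
        refine Finset.sum_congr rfl fun p hp => ?_
        obtain ⟨-, hpe⟩ := Finset.mem_filter.mp hp
        rw [← hpe]
        rw [mul_mul_mul_comm, ← fourier_add]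
        push_cast
        ring_nf
      have hb'0 : b' 0 = c i 0 * b 0 := by
        have hset : (Finset.range (2 * D) ×ˢ Finset.range N).filter
            (fun p => p.1 + 2 * p.2 = 0) = {((0 : ℕ), (0 : ℕ))} := by
          ext p
          simp only [Finset.mem_filter, Finset.mem_product, Finset.mem_range,
            Finset.mem_singleton, Prod.ext_iff]
          constructor
          · rintro ⟨⟨-, -⟩, h3⟩; omega
          · rintro ⟨h1, h2⟩
            refine ⟨⟨?_, ?_⟩, ?_⟩ <;> omega
        calc b' 0 = ∑ p ∈ (Finset.range (2 * D) ×ˢ Finset.range N).filter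
              (fun p => p.1 + 2 * p.2 = 0), c i p.1 * b p.2 := rfl
          _ = c i 0 * b 0 := by rw [hset, Finset.sum_singleton]
      refine ⟨2 * D + 2 * N, by omega, b', ?_, ?_⟩
      · rw [hb'0, hb0, List.map_cons, List.prod_cons]
      · rw [List.map_cons, List.prod_cons, ContinuousLinearMap.mul_apply, ← hf]
        exact hmain.trans (by rw [hfun])
  -- the norm of `e₀` is 1
  have he₀norm : ‖e₀‖ = 1 := by
    have h1 : (inner ℂ e₀ e₀ : ℂ) = 1 := by
      rw [L2.inner_def]
      have h2 : (fun z => (inner ℂ (e₀ z) (e₀ z) : ℂ)) =ᵐ[@haarAddCircle (1:ℝ) _]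
          fun _ => (1 : ℂ) := by
        filter_upwards [he₀] with z hz
        simp [hz]
      rw [integral_congr_ae h2, integral_const, probReal_univ, one_smul]
    have h3 := inner_self_eq_norm_sq (𝕜 := ℂ) e₀
    rw [h1] at h3
    simp only [RCLike.one_re] at h3
    nlinarith [norm_nonneg e₀, sq_nonneg (‖e₀‖ - 1), sq_nonneg (‖e₀‖ + 1)]
  -- the main bound
  have main : ∀ (k : ℕ), ∀ i : Fin k → Fin 2,
      ‖a 0‖ ^ (2 * (Finset.univ.filter fun l => i l = 0).card) *
        ‖a (2 * (D : ℤ) - 1)‖ ^ (2 * (Finset.univ.filter fun l => i l = 1).card)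
        ≤ ‖adjoint (cuntzWord S i) e₀‖ ^ 2 := by
    intro k i
    obtain ⟨N, hN, b, hb0, hae⟩ := key (List.ofFn i)
    -- the inner product of `e₀` with the word applied to `e₀` is the constant coefficient
    have hint : (inner ℂ e₀ ((cuntzWord S i) e₀) : ℂ) = b 0 := by
      rw [L2.inner_def]
      have hae2 : (fun z => (inner ℂ (e₀ z) ((cuntzWord S i e₀ :
            Lp ℂ 2 (@haarAddCircle (1:ℝ) _)) z) : ℂ)) =ᵐ[@haarAddCircle (1:ℝ) _]
          fun z => ∑ n ∈ Finset.range N, b n * fourier (n : ℤ) z := by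
        filter_upwards [he₀, hae] with z h1 h2
        rw [RCLike.inner_apply, h1]
        rw [show ((cuntzWord S i e₀ : Lp ℂ 2 (@haarAddCircle (1:ℝ) _)) : AddCircle (1:ℝ) → ℂ) z
          = (((List.ofFn i).map S).prod e₀ : Lp ℂ 2 (@haarAddCircle (1:ℝ) _)) z from rfl, h2]
        simp
      have hig : ∀ n ∈ Finset.range N,
          Integrable (fun z : AddCircle (1:ℝ) => b n * fourier (n : ℤ) z) haarAddCircle :=
        fun n _ => (cuntzAux_integrable_fourier (n : ℤ)).const_mul (b n)
      rw [integral_congr_ae hae2, integral_finset_sum _ hig]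
      have h4 : ∀ n ∈ Finset.range N,
          ∫ z : AddCircle (1:ℝ), b n * fourier (n : ℤ) z ∂haarAddCircle
          = if n = 0 then b 0 else 0 := by
        intro n _
        rw [integral_const_mul, cuntzAux_integral_fourier]
        split_ifs with h1 h2 h3
        · subst h2; rw [mul_one]
        · exact absurd (by exact_mod_cast h1) h2
        · exact absurd (by exact_mod_cast h3) h1
        · rw [mul_zero]
      rw [Finset.sum_congr rfl h4, Finset.sum_ite_eq' (Finset.range N) 0 (fun _ => b 0),
        if_pos (Finset.mem_range.mpr hN)]
    -- compute the absolute value of the constant coefficient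
    have habs : ‖b 0‖ =
        ‖a 0‖ ^ (Finset.univ.filter fun l => i l = 0).card *
        ‖a (2 * (D : ℤ) - 1)‖ ^ (Finset.univ.filter fun l => i l = 1).card := by
      rw [hb0, List.map_ofFn, List.prod_ofFn, norm_prod]
      rw [← Finset.prod_filter_mul_prod_filter_not Finset.univ (fun l => i l = 0)]
      congr 1
      · rw [Finset.prod_congr rfl (fun l hl => ?_), Finset.prod_const]
        rw [Finset.mem_filter] at hl
        rw [Function.comp_apply, hl.2, hc00]
      · have hfe : Finset.univ.filter (fun l => ¬ i l = 0) =
            Finset.univ.filter (fun l => i l = 1) := by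
          refine Finset.filter_congr fun l _ => ?_
          constructor
          · intro h
            have h2 := (i l).isLt
            rw [Fin.ext_iff] at h ⊢
            simp only [Fin.val_zero, Fin.val_one] at h ⊢
            omega
          · intro h
            rw [h]; exact one_ne_zero
        rw [hfe, Finset.prod_congr rfl (fun l hl => ?_), Finset.prod_const]
        rw [Finset.mem_filter] at hl
        rw [Function.comp_apply, hl.2, hc10]
        exact Complex.norm_conj _
    -- Cauchy–Schwarz
    have hchain : ‖b 0‖ ≤ ‖adjoint (cuntzWord S i) e₀‖ := by
      have h1 : (inner ℂ (adjoint (cuntzWord S i) e₀) e₀ : ℂ) = b 0 := by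
        rw [adjoint_inner_left]; exact hint
      calc ‖b 0‖ = ‖(inner ℂ (adjoint (cuntzWord S i) e₀) e₀ : ℂ)‖ := by
            rw [h1]
        _ ≤ ‖adjoint (cuntzWord S i) e₀‖ * ‖e₀‖ := norm_inner_le_norm _ _
        _ = ‖adjoint (cuntzWord S i) e₀‖ := by rw [he₀norm, mul_one]
    have hsq : ‖b 0‖ ^ 2 ≤ ‖adjoint (cuntzWord S i) e₀‖ ^ 2 :=
      pow_le_pow_left₀ (norm_nonneg _) hchain 2
    calc ‖a 0‖ ^ (2 * (Finset.univ.filter fun l => i l = 0).card) *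
        ‖a (2 * (D : ℤ) - 1)‖ ^ (2 * (Finset.univ.filter fun l => i l = 1).card)
        = ‖b 0‖ ^ 2 := by rw [habs]; ring
      _ ≤ ‖adjoint (cuntzWord S i) e₀‖ ^ 2 := hsq
  refine ⟨fun k _ i => main k i, fun μ₀ hμ k hk i => ?_⟩
  rw [hμ k hk i]
  exact ENNReal.ofReal_le_ofReal (main k i)
end

section
/- A quadruple (a_0, a_1, a_2, a_3) of real numbers satisfies the three equations a_0² + a_1² + a_2² + a_3² = 1, a_0 a_2 + a_1 a_3 = 0, and a_0 + a_1 + a_2 + a_3 = √2 if and only if there exists β ∈ ℝ such that a_0 = (1 + √2·cos β)/(2√2), a_1 = (1 + √2·sin β)/(2√2), a_2 = (1 − √2·cos β)/(2√2), and a_3 = (1 − √2·sin β)/(2√2). -/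
open Real

lemma exists_cos_sin (x y : ℝ) (h : x ^ 2 + y ^ 2 = 1) :
    ∃ β : ℝ, x = Real.cos β ∧ y = Real.sin β := by
  set z : ℂ := ⟨x, y⟩ with hz
  have hns : Complex.normSq z = 1 := by
    simp [Complex.normSq_mk, hz, ← sq]; linarith
  have habs : ‖z‖ = 1 := by
    rw [Complex.norm_def, hns, Real.sqrt_one]
  have hz0 : z ≠ 0 := by
    intro h0; rw [h0] at habs; simp at habs
  refine ⟨Complex.arg z, ?_, ?_⟩
  · have := Complex.cos_arg hz0
    rw [habs] at this; simpa [hz] using this.symm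
  · have := Complex.sin_arg z
    rw [habs] at this; simpa [hz] using this.symm

/-- A quadruple of real numbers satisfies
`a₀² + a₁² + a₂² + a₃² = 1`, `a₀a₂ + a₁a₃ = 0`, `a₀ + a₁ + a₂ + a₃ = √2`
if and only if it is of the form
`a₀ = (1 + √2 cos β)/(2√2)`, `a₁ = (1 + √2 sin β)/(2√2)`,
`a₂ = (1 − √2 cos β)/(2√2)`, `a₃ = (1 − √2 sin β)/(2√2)` for some `β ∈ ℝ`. -/
theorem cuntz_wavelet_stmt12 (a₀ a₁ a₂ a₃ : ℝ) :
    (a₀ ^ 2 + a₁ ^ 2 + a₂ ^ 2 + a₃ ^ 2 = 1 ∧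
      a₀ * a₂ + a₁ * a₃ = 0 ∧
      a₀ + a₁ + a₂ + a₃ = Real.sqrt 2)
    ↔ ∃ β : ℝ,
        a₀ = (1 + Real.sqrt 2 * Real.cos β) / (2 * Real.sqrt 2) ∧
        a₁ = (1 + Real.sqrt 2 * Real.sin β) / (2 * Real.sqrt 2) ∧
        a₂ = (1 - Real.sqrt 2 * Real.cos β) / (2 * Real.sqrt 2) ∧
        a₃ = (1 - Real.sqrt 2 * Real.sin β) / (2 * Real.sqrt 2) := by
  have hs2 : Real.sqrt 2 ^ 2 = 2 := Real.sq_sqrt (by norm_num)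
  have hs2pos : (0:ℝ) < Real.sqrt 2 := Real.sqrt_pos.mpr (by norm_num)
  constructor
  · rintro ⟨h1, h2, h3⟩
    -- s = a₀+a₂, t = a₁+a₃
    have hst : (a₀ + a₂) ^ 2 + (a₁ + a₃) ^ 2 = 1 := by nlinarith
    have hseq : a₀ + a₂ = Real.sqrt 2 / 2 ∧ a₁ + a₃ = Real.sqrt 2 / 2 := by
      constructor <;> nlinarith [sq_nonneg (a₀ + a₂ - a₁ - a₃), sq_nonneg (a₀ + a₂ + a₁ + a₃ - Real.sqrt 2)]
    have hxy : (a₀ - a₂) ^ 2 + (a₁ - a₃) ^ 2 = 1 := by nlinarith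
    obtain ⟨β, hc, hs⟩ := exists_cos_sin (a₀ - a₂) (a₁ - a₃) hxy
    have hne : (2 * Real.sqrt 2 : ℝ) ≠ 0 := by positivity
    refine ⟨β, ?_, ?_, ?_, ?_⟩ <;> rw [eq_div_iff hne]
    · linear_combination Real.sqrt 2 * hseq.1 + Real.sqrt 2 * hc + (1/2 : ℝ) * hs2
    · linear_combination Real.sqrt 2 * hseq.2 + Real.sqrt 2 * hs + (1/2 : ℝ) * hs2
    · linear_combination Real.sqrt 2 * hseq.1 - Real.sqrt 2 * hc + (1/2 : ℝ) * hs2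
    · linear_combination Real.sqrt 2 * hseq.2 - Real.sqrt 2 * hs + (1/2 : ℝ) * hs2
  · rintro ⟨β, h0, h1, h2, h3⟩
    have hpy := Real.sin_sq_add_cos_sq β
    have hne : Real.sqrt 2 ≠ 0 := ne_of_gt hs2pos
    subst h0 h1 h2 h3
    refine ⟨?_, ?_, ?_⟩
    · field_simp
      linear_combination (4 : ℝ) * hpy +
        (2 * Real.sin β ^ 2 + 2 * Real.cos β ^ 2 - 4) * hs2
    · field_simp
      linear_combination (Real.sqrt 2 ^ 2 + 2 - 3 * Real.sqrt 2 ^ 2) * hpy +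
        (Real.sin β ^ 2 + Real.cos β ^ 2 - 2) * hs2
    · field_simp
      linear_combination (-2 : ℝ) * hs2
end

section
/- Let F = [[a_0, 0, 0], [a_2, a_1, a_0], [0, a_3, a_2]]. Then: (b) the characteristic polynomial of F is (λ − a_0)(λ − 1/√2)(λ − (sin β − cos β)/2), so the spectrum of F is {a_0, 1/√2, (sin β − cos β)/2}; and (c) for β ∈ (−π, π], the condition a_0 > 1/√2 ≥ max{|λ| : λ an eigenvalue of F, λ ≠ a_0} holds if and only if |β| < π/4. -/
open Real Matrix Polynomial

lemma mem_spec_iff_charpoly_root {n : Type*} [Fintype n] [DecidableEq n]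
    (M : Matrix n n ℝ) (μ : ℝ) :
    μ ∈ spectrum ℝ M ↔ M.charpoly.eval μ = 0 := by
  rw [spectrum.mem_iff, Matrix.charpoly, eval_det, matPolyEquiv_charmatrix]
  simp only [eval_sub, eval_X, eval_C]
  have halg : (algebraMap ℝ (Matrix n n ℝ)) μ = Matrix.scalar n μ := rfl
  rw [halg, Matrix.isUnit_iff_isUnit_det, isUnit_iff_ne_zero, not_not]

/-- For `a₀, a₁, a₂, a₃` parameterized by `β` as in (22), the matrix
`F = [[a₀,0,0],[a₂,a₁,a₀],[0,a₃,a₂]]` has characteristic polynomial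
`(λ − a₀)(λ − 1/√2)(λ − (sin β − cos β)/2)`, hence spectrum
`{a₀, 1/√2, (sin β − cos β)/2}`; and, for `β ∈ (−π, π]`, the dominance condition
`a₀ > 1/√2 ≥ max{|λ| : λ ∈ spec F, λ ≠ a₀}` holds iff `|β| < π/4`. -/
theorem cuntz_wavelet_stmt13 (β : ℝ)
    (a₀ a₁ a₂ a₃ : ℝ)
    (h₀ : a₀ = (1 + Real.sqrt 2 * Real.cos β) / (2 * Real.sqrt 2))
    (h₁ : a₁ = (1 + Real.sqrt 2 * Real.sin β) / (2 * Real.sqrt 2))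
    (h₂ : a₂ = (1 - Real.sqrt 2 * Real.cos β) / (2 * Real.sqrt 2))
    (h₃ : a₃ = (1 - Real.sqrt 2 * Real.sin β) / (2 * Real.sqrt 2))
    (F : Matrix (Fin 3) (Fin 3) ℝ)
    (hF : F = !![a₀, 0, 0; a₂, a₁, a₀; 0, a₃, a₂]) :
    (F.charpoly =
        (X - C a₀) * (X - C (Real.sqrt 2)⁻¹) *
          (X - C ((Real.sin β - Real.cos β) / 2)) ∧
      spectrum ℝ F = {a₀, (Real.sqrt 2)⁻¹, (Real.sin β - Real.cos β) / 2}) ∧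
    (-π < β → β ≤ π →
      (((Real.sqrt 2)⁻¹ < a₀ ∧
          ∀ lam ∈ spectrum ℝ F, lam ≠ a₀ → |lam| ≤ (Real.sqrt 2)⁻¹)
        ↔ |β| < π / 4)) := by
  have s2 : Real.sqrt 2 * Real.sqrt 2 = 2 := Real.mul_self_sqrt (by norm_num)
  have s2pos : (0:ℝ) < Real.sqrt 2 := Real.sqrt_pos.mpr (by norm_num)
  have hcp : F.charpoly =
      (X - C a₀) * (X - C (Real.sqrt 2)⁻¹) *
        (X - C ((Real.sin β - Real.cos β) / 2)) := by
    rw [Matrix.charpoly, hF]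
    rw [show charmatrix !![a₀, 0, 0; a₂, a₁, a₀; 0, a₃, a₂] =
        !![X - C a₀, -C 0, -C 0; -C a₂, X - C a₁, -C a₀; -C 0, -C a₃, X - C a₂] by
      ext i j
      fin_cases i <;> fin_cases j <;>
        simp [charmatrix_apply_eq, charmatrix_apply_ne]]
    rw [Matrix.det_fin_three]
    apply Polynomial.funext
    intro x
    simp only [Matrix.cons_val', Matrix.cons_val_zero, Matrix.cons_val_one, Matrix.head_cons,
      Matrix.head_fin_const, Matrix.empty_val', Matrix.cons_val_fin_one, Matrix.head_fin_const,
      eval_add, eval_sub, eval_mul, eval_neg, eval_X, eval_C, map_zero, eval_zero, Matrix.of_apply,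
      Matrix.cons_val_two, Matrix.tail_cons, neg_zero]
    subst h₀ h₁ h₂ h₃
    have hinv : (Real.sqrt 2)⁻¹ = Real.sqrt 2 / 2 := by
      rw [eq_div_iff (by norm_num), inv_mul_eq_div, div_eq_iff (ne_of_gt s2pos), s2]
    rw [hinv]
    field_simp
    linear_combination (4*x^2*(Real.sqrt 2)^2 - 2*x*(Real.sqrt 2)^2*Real.sin β -
      2*x*Real.sqrt 2 + Real.sqrt 2*Real.sin β - Real.sqrt 2*Real.cos β +
      (Real.sqrt 2)^2*Real.cos β*Real.sin β - (Real.sqrt 2)^2*(Real.cos β)^2) * s2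
  have hspec : spectrum ℝ F = {a₀, (Real.sqrt 2)⁻¹, (Real.sin β - Real.cos β) / 2} := by
    ext μ
    rw [mem_spec_iff_charpoly_root, hcp]
    simp only [eval_mul, eval_sub, eval_X, eval_C, mul_eq_zero, sub_eq_zero]
    constructor
    · rintro ((h | h) | h) <;> simp [h]
    · intro h
      rcases h with h | h | h <;> simp_all
  refine ⟨⟨hcp, hspec⟩, ?_⟩
  intro hβ1 hβ2
  have habs : ∀ lam ∈ spectrum ℝ F, lam ≠ a₀ → |lam| ≤ (Real.sqrt 2)⁻¹ := by
    intro lam hlam hne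
    rw [hspec] at hlam
    have hinv : (Real.sqrt 2)⁻¹ = Real.sqrt 2 / 2 := by
      rw [eq_div_iff (by norm_num), inv_mul_eq_div, div_eq_iff (ne_of_gt s2pos), s2]
    rcases hlam with h | h | h
    · exact absurd h hne
    · rw [h, abs_of_pos (by positivity)]
    · rw [h, hinv]
      have h1 : |Real.sin β - Real.cos β| ≤ Real.sqrt 2 := by
        rw [← Real.sqrt_sq_eq_abs]
        apply Real.sqrt_le_sqrt
        nlinarith [Real.sin_sq_add_cos_sq β, neg_one_le_sin β, Real.sin_le_one β,
          neg_one_le_cos β, Real.cos_le_one β, sq_nonneg (Real.sin β + Real.cos β)]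
      rw [abs_div]
      rw [abs_of_pos (show (0:ℝ) < 2 by norm_num)]
      linarith
  constructor
  · rintro ⟨hlt, -⟩
    -- hlt : (√2)⁻¹ < a₀ means cos β > √2/2 = cos (π/4)
    have hcos : Real.cos (π/4) < Real.cos |β| := by
      rw [Real.cos_abs, Real.cos_pi_div_four]
      rw [h₀, lt_div_iff₀ (by positivity)] at hlt
      have h2' : (Real.sqrt 2)⁻¹ * (2 * Real.sqrt 2) = 2 := by
        field_simp
      rw [h2'] at hlt
      nlinarith [s2, s2pos]
    by_contra hcon
    push_neg at hcon
    have : Real.cos |β| ≤ Real.cos (π/4) := by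
      rcases le_or_gt |β| π with h | h
      · exact Real.cos_le_cos_of_nonneg_of_le_pi (by positivity) h hcon
      · exfalso
        rcases abs_cases β with ⟨e, _⟩ | ⟨e, _⟩ <;> linarith
    linarith
  · intro hβ
    refine ⟨?_, habs⟩
    have hcos : Real.cos |β| > Real.cos (π/4) := by
      apply Real.cos_lt_cos_of_nonneg_of_le_pi (by positivity) (by linarith [Real.pi_pos]) hβ
    rw [Real.cos_abs, Real.cos_pi_div_four] at hcos
    rw [h₀, lt_div_iff₀ (by positivity)]
    have h2' : (Real.sqrt 2)⁻¹ * (2 * Real.sqrt 2) = 2 := by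
      field_simp
    rw [h2']
    nlinarith [s2, s2pos]
end

section
/- Let ξ = i_1/2 + ⋯ + i_k/2^k be a dyadic fraction with digits i_1, …, i_k ∈ {0,1}, and write N_0 = #{j : i_j = 0} and N_1 = #{j : i_j = 1}. Then lim_{n→∞} a_0^{−n}·F_0^n F_{i_k}⋯F_{i_1} e_0 = a_0^{N_0}·a_3^{N_1}·(e_0 + v). Moreover, for every ε with 0 < ε < 1 there exists n_0 ∈ ℕ such that for all n ≥ n_0: (1 + ‖v‖² − ε)·(a_0^{N_0} a_3^{N_1})² ≤ a_0^{−2n}·‖F_0^n F_{i_k}⋯F_{i_1} e_0‖² ≤ (a_0^{N_0} a_3^{N_1})²·(1 + ‖v‖² + ε). -/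
open Real Matrix Filter

/-- The matrix word `F_{i_k} ⋯ F_{i_1}` (rightmost factor applied first), real version. -/
noncomputable def matWordR {N : ℕ} (F : Fin N → Matrix (Fin 3) (Fin 3) ℝ) {k : ℕ}
    (i : Fin k → Fin N) : Matrix (Fin 3) (Fin 3) ℝ :=
  ((List.ofFn i).reverse.map F).prod

lemma aux_rec_tendsto (τ δ : ℝ) (hδ : δ < 0) (h1 : 0 < 1 - τ + δ) (h2 : 0 < 1 + τ + δ)
    (w : ℕ → ℝ) (hw : ∀ n, w (n+2) = τ * w (n+1) - δ * w n) :
    Filter.Tendsto w Filter.atTop (nhds 0) := by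
  have hd0 : 0 < τ^2 - 4*δ := by nlinarith [sq_nonneg τ]
  set q : ℝ := Real.sqrt (τ^2 - 4*δ) with hqdef
  have hq2 : q^2 = τ^2 - 4*δ := Real.sq_sqrt hd0.le
  have hq0 : 0 < q := Real.sqrt_pos.mpr hd0
  have hτ1 : τ < 1 := by nlinarith
  have hτ2 : -1 < τ := by nlinarith
  have hqlt1 : q < 2 - τ := by
    rw [hqdef]
    exact (Real.sqrt_lt' (by linarith : (0:ℝ) < 2 - τ)).mpr (by nlinarith)
  have hqlt2 : q < 2 + τ := by
    rw [hqdef]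
    exact (Real.sqrt_lt' (by linarith : (0:ℝ) < 2 + τ)).mpr (by nlinarith)
  set μp : ℝ := (τ + q)/2 with hμp
  set μm : ℝ := (τ - q)/2 with hμm
  have habsp : |μp| < 1 := by rw [abs_lt]; constructor <;> rw [hμp] <;> linarith
  have habsm : |μm| < 1 := by rw [abs_lt]; constructor <;> rw [hμm] <;> linarith
  have hp2 : μp^2 = τ*μp - δ := by rw [hμp]; linear_combination hq2/4
  have hm2 : μm^2 = τ*μm - δ := by rw [hμm]; linear_combination hq2/4
  set A : ℝ := w 1 - μm * w 0 with hA
  set B : ℝ := μp * w 0 - w 1 with hB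
  have key : ∀ n, q * w n = A * μp^n + B * μm^n := by
    intro n
    induction n using Nat.twoStepInduction with
    | zero => rw [hA, hB, hμp, hμm]; ring
    | one => rw [hA, hB, hμp, hμm]; ring
    | more n ih1 ih2 =>
        rw [hw n]
        linear_combination τ * ih2 - δ * ih1 + (A*μp^n) * hp2 + (B*μm^n) * hm2 +
          hq2 * ((-(τ*w 0)/4 + w 1/2 - q*w 0/4) * μm^n + ((τ*w 0)/4 - w 1/2 - q*w 0/4) * μp^n)
  have T : Tendsto (fun n => q * w n) atTop (nhds 0) := by
    have T0 : Tendsto (fun n => A * μp^n + B * μm^n) atTop (nhds 0) := by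
      have := ((tendsto_pow_atTop_nhds_zero_of_abs_lt_one habsp).const_mul A).add
        ((tendsto_pow_atTop_nhds_zero_of_abs_lt_one habsm).const_mul B)
      simpa using this
    exact T0.congr (fun n => (key n).symm)
  have T2 := T.const_mul q⁻¹
  simp only [← mul_assoc, inv_mul_cancel₀ hq0.ne', one_mul, mul_zero] at T2
  exact T2

lemma aux_count_ofFn {k : ℕ} (i : Fin k → Fin 2) (a : Fin 2) :
    (List.ofFn i).count a = (Finset.univ.filter fun j => i j = a).card := by
  rw [List.ofFn_eq_map, List.count_eq_countP, List.countP_map,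
    List.countP_eq_length_filter, Finset.card_filter, Fin.sum_univ_def]
  induction (List.finRange k) with
  | nil => simp
  | cons hd tl ih =>
      by_cases h : i hd = a <;> simp [List.filter_cons, h, ih] <;> omega

set_option maxHeartbeats 2000000 in
/-- For `|β| < π/4` and digits `i₁,…,i_k ∈ {0,1}`, with `N₀ = #{j : i_j = 0}`
and `N₁ = #{j : i_j = 1}`, one has
`lim_n a₀^{−n} F₀ⁿ F_{i_k}⋯F_{i_1} e₀ = a₀^{N₀} a₃^{N₁} (e₀ + v)`, and for every
`0 < ε < 1` there is `n₀` with
`(1+‖v‖²−ε)(a₀^{N₀}a₃^{N₁})² ≤ a₀^{−2n}‖F₀ⁿF_{i_k}⋯F_{i_1}e₀‖² ≤ (a₀^{N₀}a₃^{N₁})²(1+‖v‖²+ε)`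
for all `n ≥ n₀`. -/
theorem cuntz_wavelet_stmt14 (β : ℝ) (hβ : |β| < π / 4)
    (a₀ a₁ a₂ a₃ : ℝ)
    (h₀ : a₀ = (1 + Real.sqrt 2 * Real.cos β) / (2 * Real.sqrt 2))
    (h₁ : a₁ = (1 + Real.sqrt 2 * Real.sin β) / (2 * Real.sqrt 2))
    (h₂ : a₂ = (1 - Real.sqrt 2 * Real.cos β) / (2 * Real.sqrt 2))
    (h₃ : a₃ = (1 - Real.sqrt 2 * Real.sin β) / (2 * Real.sqrt 2))
    (F : Fin 2 → Matrix (Fin 3) (Fin 3) ℝ)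
    (hF₀ : F 0 = !![a₀, 0, 0; a₂, a₁, a₀; 0, a₃, a₂])
    (hF₁ : F 1 = !![a₃, 0, 0; a₁, -a₂, a₃; 0, -a₀, a₁])
    (v₂ : Fin 2 → ℝ)
    (hv₂ : (a₀ • (1 : Matrix (Fin 2) (Fin 2) ℝ) -
        !![a₁, a₀; a₃, a₂]).mulVec v₂ = ![a₂, 0])
    (v : Fin 3 → ℝ) (hv : v = ![0, v₂ 0, v₂ 1])
    (e₀ : Fin 3 → ℝ) (he₀ : e₀ = ![1, 0, 0])
    (k : ℕ) (i : Fin k → Fin 2)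
    (N₀ N₁ : ℕ)
    (hN₀ : N₀ = (Finset.univ.filter fun j => i j = 0).card)
    (hN₁ : N₁ = (Finset.univ.filter fun j => i j = 1).card) :
    Filter.Tendsto
        (fun n : ℕ => (a₀ ^ n)⁻¹ • ((F 0) ^ n * matWordR F i).mulVec e₀)
        Filter.atTop (nhds ((a₀ ^ N₀ * a₃ ^ N₁) • (e₀ + v))) ∧
    ∀ ε : ℝ, 0 < ε → ε < 1 → ∃ n₀ : ℕ, ∀ n : ℕ, n₀ ≤ n →
      (1 + (∑ j, v j ^ 2) - ε) * (a₀ ^ N₀ * a₃ ^ N₁) ^ 2 ≤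
          (a₀ ^ (2 * n))⁻¹ * ∑ j, (((F 0) ^ n * matWordR F i).mulVec e₀ j) ^ 2 ∧
        (a₀ ^ (2 * n))⁻¹ * ∑ j, (((F 0) ^ n * matWordR F i).mulVec e₀ j) ^ 2 ≤
          (a₀ ^ N₀ * a₃ ^ N₁) ^ 2 * (1 + (∑ j, v j ^ 2) + ε) := by
  -- ## Scalar preliminaries
  have hr0 : (0:ℝ) < Real.sqrt 2 := by positivity
  have hr2 : Real.sqrt 2 ^ 2 = 2 := Real.sq_sqrt (by norm_num)
  have hπ : (0:ℝ) < π := Real.pi_pos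
  have hβlt : β < π/4 := lt_of_abs_lt hβ
  have hβgt : -(π/4) < β := neg_lt_of_abs_lt hβ
  have hc : Real.sqrt 2/2 < Real.cos β := by
    have h1 : Real.cos (π/4) < Real.cos |β| := by
      rcases eq_or_ne β 0 with h | h
      · rw [h]; simp [Real.cos_pi_div_four]
        nlinarith [Real.cos_pi_div_four]
      · exact Real.cos_lt_cos_of_nonneg_of_le_pi (abs_nonneg β) (by linarith) hβ
    rw [Real.cos_abs, Real.cos_pi_div_four] at h1; exact h1
  have hs1 : Real.sin β < Real.sqrt 2/2 := by
    have h1 : Real.sin β < Real.sin (π/4) :=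
      Real.sin_lt_sin_of_lt_of_le_pi_div_two (by linarith) (by linarith) hβlt
    rwa [Real.sin_pi_div_four] at h1
  have hs2 : -(Real.sqrt 2/2) < Real.sin β := by
    have h1 : Real.sin (-(π/4)) < Real.sin β :=
      Real.sin_lt_sin_of_lt_of_le_pi_div_two (by linarith) (by linarith) hβgt
    rwa [Real.sin_neg, Real.sin_pi_div_four] at h1
  set q : ℝ := Real.sqrt 2 / 2 with hqdef
  have hq0 : 0 < q := by positivity
  have ea0 : a₀ = (q + Real.cos β)/2 := by
    rw [h₀, hqdef, div_eq_div_iff (by positivity) (by norm_num)]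
    linear_combination -hr2
  have ea1 : a₁ = (q + Real.sin β)/2 := by
    rw [h₁, hqdef, div_eq_div_iff (by positivity) (by norm_num)]
    linear_combination -hr2
  have ea2 : a₂ = (q - Real.cos β)/2 := by
    rw [h₂, hqdef, div_eq_div_iff (by positivity) (by norm_num)]
    linear_combination -hr2
  have ea3 : a₃ = (q - Real.sin β)/2 := by
    rw [h₃, hqdef, div_eq_div_iff (by positivity) (by norm_num)]
    linear_combination -hr2
  have hcs : Real.sin β < Real.cos β := lt_trans hs1 hc
  have ha0 : 0 < a₀ := by rw [ea0]; linarith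
  have ha3 : 0 < a₃ := by rw [ea3]; linarith
  have hD : a₁*a₂ - a₀*a₃ < 0 := by
    rw [ea0, ea1, ea2, ea3]
    nlinarith [mul_pos hq0 (sub_pos.2 hcs)]
  have hpa : 0 < a₀^2 - (a₁+a₂)*a₀ + (a₁*a₂ - a₀*a₃) := by
    rw [ea0, ea1, ea2, ea3]
    nlinarith [mul_pos (sub_pos.2 hc) (show 0 < 2*Real.cos β - Real.sin β + q by linarith)]
  have hpma : 0 < a₀^2 + (a₁+a₂)*a₀ + (a₁*a₂ - a₀*a₃) := by
    rw [ea0, ea1, ea2, ea3]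
    nlinarith [mul_pos (show 0 < q + Real.sin β by linarith)
      (show 0 < 3*q + Real.cos β by linarith)]
  have ha0n : ∀ n : ℕ, (0:ℝ) < a₀ ^ n := fun n => pow_pos ha0 n
  -- ## Linear identities from hv₂
  have hv0 : (a₀ - a₁) * v₂ 0 - a₀ * v₂ 1 = a₂ := by
    have h := congrFun hv₂ 0
    simp [Matrix.mulVec, dotProduct, Fin.sum_univ_two, Matrix.sub_apply,
      Matrix.smul_apply, Matrix.one_apply] at h
    linarith
  have hv1 : -(a₃ * v₂ 0) + (a₀ - a₂) * v₂ 1 = 0 := by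
    have h := congrFun hv₂ 1
    simp [Matrix.mulVec, dotProduct, Fin.sum_univ_two, Matrix.sub_apply,
      Matrix.smul_apply, Matrix.one_apply] at h
    linarith
  -- ## Structure of the word applied to e₀
  have wordkey : ∀ l : List (Fin 2), ∃ y1 y2 : ℝ,
      ((l.map F).prod).mulVec e₀ = ![a₀ ^ (l.count 0) * a₃ ^ (l.count 1), y1, y2] := by
    intro l
    induction l with
    | nil => exact ⟨0, 0, by rw [he₀]; simp⟩
    | cons hd tl ih =>
        obtain ⟨y1, y2, hy⟩ := ih
        rw [List.map_cons, List.prod_cons, ← Matrix.mulVec_mulVec, hy]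
        rcases (show hd = 0 ∨ hd = 1 by omega) with rfl | rfl
        · refine ⟨a₂ * (a₀ ^ (tl.count 0) * a₃ ^ (tl.count 1)) + a₁*y1 + a₀*y2,
            a₃*y1 + a₂*y2, ?_⟩
          rw [hF₀]
          funext j; fin_cases j <;>
            simp [Matrix.mulVec, dotProduct, Fin.sum_univ_three,
              List.count_cons, pow_succ] <;> ring
        · refine ⟨a₁ * (a₀ ^ (tl.count 0) * a₃ ^ (tl.count 1)) - a₂*y1 + a₃*y2,
            -(a₀*y1) + a₁*y2, ?_⟩
          rw [hF₁]
          funext j; fin_cases j <;>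
            simp [Matrix.mulVec, dotProduct, Fin.sum_univ_three,
              List.count_cons, pow_succ] <;> ring
  obtain ⟨y1, y2, hword⟩ := wordkey ((List.ofFn i).reverse)
  set P : ℝ := a₀ ^ N₀ * a₃ ^ N₁ with hP
  have hword' : (matWordR F i).mulVec e₀ = ![P, y1, y2] := by
    rw [matWordR, hword, hP, hN₀, hN₁]
    rw [List.count_reverse, List.count_reverse, aux_count_ofFn, aux_count_ofFn]
  have hP0 : 0 < P := mul_pos (pow_pos ha0 N₀) (pow_pos ha3 N₁)
  -- ## Action of powers of F 0
  set G : Matrix (Fin 2) (Fin 2) ℝ := !![a₁, a₀; a₃, a₂] with hG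
  have hGv : ∀ u : Fin 2 → ℝ, G.mulVec u = ![a₁ * u 0 + a₀ * u 1, a₃ * u 0 + a₂ * u 1] := by
    intro u; rw [hG]; funext j; fin_cases j <;>
      simp [Matrix.mulVec, dotProduct, Fin.sum_univ_two]
  set w : ℕ → Fin 2 → ℝ := fun n => (G^n).mulVec ![y1 - P*v₂ 0, y2 - P*v₂ 1] with hw
  have hwsucc : ∀ n, w (n+1) = G.mulVec (w n) := by
    intro n; rw [hw]; simp only [pow_succ', ← Matrix.mulVec_mulVec]
  have hw00 : w 0 0 = y1 - P*v₂ 0 := by rw [hw]; simp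
  have hw01 : w 0 1 = y2 - P*v₂ 1 := by rw [hw]; simp
  have hFn : ∀ n, ((F 0)^n).mulVec ![P, y1, y2] =
      ![a₀^n * P, a₀^n * (P * v₂ 0) + w n 0, a₀^n * (P * v₂ 1) + w n 1] := by
    intro n
    induction n with
    | zero =>
        funext j; fin_cases j <;> simp [hw00, hw01] <;> ring
    | succ n ih =>
        rw [pow_succ', ← Matrix.mulVec_mulVec, ih, hF₀, hwsucc n, hGv]
        funext j; fin_cases j
        · simp [Matrix.mulVec, dotProduct, Fin.sum_univ_three, pow_succ]
          ring
        · simp [Matrix.mulVec, dotProduct, Fin.sum_univ_three, pow_succ]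
          linear_combination (-(a₀^n * P)) * hv0
        · simp [Matrix.mulVec, dotProduct, Fin.sum_univ_three, pow_succ]
          linear_combination (-(a₀^n * P)) * hv1
  -- ## Decay of the remainder
  have hCH : ∀ n j, w (n+2) j = (a₁+a₂) * w (n+1) j - (a₁*a₂ - a₀*a₃) * w n j := by
    intro n j
    rw [hwsucc (n+1), hwsucc n, hGv, hGv]
    fin_cases j <;> simp <;> ring
  have hdecay : ∀ j : Fin 2, Tendsto (fun n => (a₀^n)⁻¹ * w n j) atTop (nhds 0) := by
    intro j
    apply aux_rec_tendsto ((a₁+a₂)/a₀) ((a₁*a₂ - a₀*a₃)/a₀^2)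
    · exact div_neg_of_neg_of_pos hD (by positivity)
    · have : 1 - (a₁+a₂)/a₀ + (a₁*a₂ - a₀*a₃)/a₀^2
          = (a₀^2 - (a₁+a₂)*a₀ + (a₁*a₂ - a₀*a₃))/a₀^2 := by
        field_simp
      rw [this]; positivity
    · have : 1 + (a₁+a₂)/a₀ + (a₁*a₂ - a₀*a₃)/a₀^2
          = (a₀^2 + (a₁+a₂)*a₀ + (a₁*a₂ - a₀*a₃))/a₀^2 := by
        field_simp
      rw [this]; positivity
    · intro n
      rw [hCH n j]
      field_simp
      ring
  -- ## The function in explicit form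
  have hfun : ∀ n, (a₀ ^ n)⁻¹ • ((F 0) ^ n * matWordR F i).mulVec e₀ =
      ![P, P * v₂ 0 + (a₀^n)⁻¹ * w n 0, P * v₂ 1 + (a₀^n)⁻¹ * w n 1] := by
    intro n
    rw [← Matrix.mulVec_mulVec, hword', hFn n]
    funext j; fin_cases j <;>
      simp [Pi.smul_apply, smul_eq_mul] <;> field_simp <;> ring
  have hLim : (P • (e₀ + v)) = ![P, P * v₂ 0, P * v₂ 1] := by
    funext j; fin_cases j <;> simp [he₀, hv] <;> ring
  have Tmain : Filter.Tendsto
      (fun n : ℕ => (a₀ ^ n)⁻¹ • ((F 0) ^ n * matWordR F i).mulVec e₀)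
      Filter.atTop (nhds (P • (e₀ + v))) := by
    rw [tendsto_pi_nhds]
    intro j
    have hcongr : ∀ n : ℕ, (![P, P * v₂ 0 + (a₀^n)⁻¹ * w n 0,
        P * v₂ 1 + (a₀^n)⁻¹ * w n 1] : Fin 3 → ℝ) j
        = ((a₀ ^ n)⁻¹ • ((F 0) ^ n * matWordR F i).mulVec e₀) j := by
      intro n; rw [hfun n]
    refine Tendsto.congr hcongr ?_
    rw [hLim]
    fin_cases j
    · simpa using (tendsto_const_nhds :
        Tendsto (fun _ : ℕ => P) atTop (nhds P))
    · have := (hdecay 0).const_add (P * v₂ 0)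
      simpa using this
    · have := (hdecay 1).const_add (P * v₂ 1)
      simpa using this
  refine ⟨Tmain, ?_⟩
  -- ## Part 2: the norm bounds
  have hsum : ∀ n : ℕ, (a₀ ^ (2 * n))⁻¹ * ∑ j, (((F 0) ^ n * matWordR F i).mulVec e₀ j) ^ 2
      = ∑ j, (((a₀ ^ n)⁻¹ • ((F 0) ^ n * matWordR F i).mulVec e₀) j) ^ 2 := by
    intro n
    rw [Finset.mul_sum]
    refine Finset.sum_congr rfl fun j _ => ?_
    rw [Pi.smul_apply, smul_eq_mul, mul_pow, mul_comm 2 n, pow_mul, ← inv_pow]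
  have Tnorm : Tendsto (fun n : ℕ =>
      ∑ j, (((a₀ ^ n)⁻¹ • ((F 0) ^ n * matWordR F i).mulVec e₀) j) ^ 2) atTop
      (nhds (∑ j, ((P • (e₀ + v)) j) ^ 2)) := by
    apply tendsto_finset_sum
    intro j _
    exact ((tendsto_pi_nhds.mp Tmain) j).pow 2
  have hLsum : ∑ j, ((P • (e₀ + v)) j) ^ 2 = P^2 * (1 + ∑ j, v j ^ 2) := by
    rw [hLim]
    simp [Fin.sum_univ_three, hv]
    ring
  intro ε hε hε1
  have hmargin : 0 < P^2 * ε := by positivity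
  obtain ⟨n₀, hn₀⟩ := (Metric.tendsto_atTop.mp Tnorm) (P^2 * ε) hmargin
  refine ⟨n₀, fun n hn => ?_⟩
  have h := hn₀ n hn
  rw [Real.dist_eq, hLsum] at h
  have h2 := abs_lt.mp h
  rw [hsum n]
  constructor <;> nlinarith [h2.1, h2.2]
end

section
/- Suppose μ_0 is absolutely continuous with respect to Lebesgue measure on [0,1), with Radon–Nikodym derivative f. Then f is essentially unbounded on every nonempty open subset of [0,1): for every nonempty open V ⊆ [0,1) and every constant C > 0, the set {x ∈ V : f(x) > C} has positive Lebesgue measure. -/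
open Real Matrix MeasureTheory
open scoped ENNReal

lemma dyadicVal_snoc {k : ℕ} (i : Fin k → Fin 2) (d : Fin 2) :
    dyadicVal (Fin.snoc i d) = dyadicVal i + ((d : ℕ) : ℝ) * (2⁻¹ : ℝ) ^ (k + 1) := by
  unfold dyadicVal
  rw [Fin.sum_univ_castSucc]
  simp

lemma matWordR_snoc {N k : ℕ} (F : Fin N → Matrix (Fin 3) (Fin 3) ℝ)
    (i : Fin k → Fin N) (d : Fin N) :
    matWordR F (Fin.snoc i d) = F d * matWordR F i := by
  unfold matWordR
  rw [List.ofFn_succ']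
  simp

lemma geomsum (m : ℕ) : ∑ j : Fin m, (2⁻¹ : ℝ) ^ ((j : ℕ) + 1) = 1 - (2⁻¹ : ℝ) ^ m := by
  induction m with
  | zero => simp
  | succ m ih => rw [Fin.sum_univ_castSucc]; simp only [Fin.coe_castSucc, Fin.val_last, ih]; ring

lemma dyadicVal_nonneg {k : ℕ} (i : Fin k → Fin 2) : 0 ≤ dyadicVal i := by
  unfold dyadicVal
  positivity

lemma dyadicVal_le {k : ℕ} (i : Fin k → Fin 2) : dyadicVal i ≤ 1 - (2⁻¹ : ℝ) ^ k := by
  rw [← geomsum k]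
  apply Finset.sum_le_sum
  intro j _
  have : ((i j : ℕ) : ℝ) ≤ 1 := by
    have := (i j).isLt; interval_cases h : (i j : ℕ) <;> simp
  nlinarith [pow_pos (by norm_num : (0:ℝ) < 2⁻¹) ((j:ℕ)+1)]

lemma dyadic_cover (x : ℝ) (hx : x ∈ Set.Ico (0:ℝ) 1) (m : ℕ) :
    ∃ i : Fin m → Fin 2, x ∈ Set.Ico (dyadicVal i) (dyadicVal i + (2⁻¹:ℝ)^m) := by
  induction m with
  | zero =>
    refine ⟨![], ?_⟩
    simpa [dyadicVal] using hx
  | succ m ih =>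
    obtain ⟨i, h1, h2⟩ := ih
    have hpow : (2⁻¹:ℝ)^m = 2 * (2⁻¹:ℝ)^(m+1) := by ring
    have hip : ((2:ℝ)^(m+1))⁻¹ = (2⁻¹:ℝ)^(m+1) := by rw [inv_pow]
    by_cases h : x < dyadicVal i + (2⁻¹:ℝ)^(m+1)
    · refine ⟨Fin.snoc i 0, ?_, ?_⟩ <;> rw [dyadicVal_snoc] <;> simp <;> (try rw [hip]) <;> linarith
    · push_neg at h
      refine ⟨Fin.snoc i 1, ?_, ?_⟩ <;> rw [dyadicVal_snoc] <;> simp <;> (try rw [hip]) <;> linarith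

/-- For `|β| < π/4`, if the Coifman–Meyer–Wickerhauser measure `μ₀`
is absolutely continuous with respect to Lebesgue measure with Radon–Nikodym
derivative `f`, then `f` is essentially unbounded on every nonempty open subset `V`
of `[0,1)`: for every `C > 0` the set `{x ∈ V : f x > C}` has positive Lebesgue
measure. -/
theorem cuntz_wavelet_stmt15 (β : ℝ) (hβ : |β| < π / 4)
    (a₀ a₁ a₂ a₃ : ℝ)
    (h₀ : a₀ = (1 + Real.sqrt 2 * Real.cos β) / (2 * Real.sqrt 2))
    (h₁ : a₁ = (1 + Real.sqrt 2 * Real.sin β) / (2 * Real.sqrt 2))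
    (h₂ : a₂ = (1 - Real.sqrt 2 * Real.cos β) / (2 * Real.sqrt 2))
    (h₃ : a₃ = (1 - Real.sqrt 2 * Real.sin β) / (2 * Real.sqrt 2))
    (F : Fin 2 → Matrix (Fin 3) (Fin 3) ℝ)
    (hF₀ : F 0 = !![a₀, 0, 0; a₂, a₁, a₀; 0, a₃, a₂])
    (hF₁ : F 1 = !![a₃, 0, 0; a₁, -a₂, a₃; 0, -a₀, a₁])
    (e₀ : Fin 3 → ℝ) (he₀ : e₀ = ![1, 0, 0])
    (μ₀ : Measure ℝ)
    (hμ₀ : ∀ (k : ℕ) (i : Fin k → Fin 2),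
      μ₀ (Set.Ico (dyadicVal i) (dyadicVal i + (2⁻¹ : ℝ) ^ k)) =
        ENNReal.ofReal (∑ n, ((matWordR F i).mulVec e₀ n) ^ 2))
    (f : ℝ → ℝ≥0∞)
    (hac : μ₀ = MeasureTheory.Measure.withDensity volume f) :
    ∀ U : Set ℝ, IsOpen U → (U ∩ Set.Ico (0 : ℝ) 1).Nonempty →
      ∀ C : ℝ, 0 < C →
        0 < volume { x ∈ U ∩ Set.Ico (0 : ℝ) 1 | ENNReal.ofReal C < f x } := by
  intro U hU hne C hC
  by_contra hcon
  push_neg at hcon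
  have hnull : volume { x ∈ U ∩ Set.Ico (0 : ℝ) 1 | ENNReal.ofReal C < f x } = 0 :=
    le_antisymm hcon zero_le
  -- basic positivity facts
  have hs2 : (0:ℝ) < Real.sqrt 2 := Real.sqrt_pos.mpr (by norm_num)
  have hs2sq : Real.sqrt 2 ^ 2 = 2 := Real.sq_sqrt (by norm_num)
  have habs := abs_lt.mp hβ
  have hpi : (0:ℝ) < π := Real.pi_pos
  have hsin : Real.sqrt 2 * Real.sin β < 1 := by
    have h1 : Real.sin β < Real.sin (π/4) := by
      apply Real.sin_lt_sin_of_lt_of_le_pi_div_two (by linarith [habs.1]) (by linarith) habs.2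
    rw [Real.sin_pi_div_four] at h1
    nlinarith
  have hcos : 1 < Real.sqrt 2 * Real.cos β := by
    have h1 : Real.cos (π/4) < Real.cos |β| := by
      apply Real.cos_lt_cos_of_nonneg_of_le_pi (abs_nonneg β) (by linarith) hβ
    rw [Real.cos_pi_div_four, Real.cos_abs] at h1
    nlinarith
  have ha0 : 0 < a₀ := by rw [h₀]; positivity
  have ha3 : 0 < a₃ := by
    rw [h₃]
    apply div_pos (by linarith) (by linarith)
  have h2a0 : 1 < 2 * a₀ ^ 2 := by
    rw [h₀, div_pow, mul_pow, hs2sq]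
    have he : 2 * ((1 + Real.sqrt 2 * Real.cos β) ^ 2 / (2 ^ 2 * 2)) =
        (1 + Real.sqrt 2 * Real.cos β) ^ 2 / 4 := by ring
    rw [he, lt_div_iff₀ (by norm_num)]
    nlinarith
  -- first coordinate action
  have hmul0 : ∀ (v : Fin 3 → ℝ) (d : Fin 2),
      (F d).mulVec v 0 = (if d = 0 then a₀ else a₃) * v 0 := by
    intro v d
    fin_cases d <;>
      simp [hF₀, hF₁, Matrix.mulVec, dotProduct, Fin.sum_univ_three]
  have hpos : ∀ (k : ℕ) (i : Fin k → Fin 2), 0 < (matWordR F i).mulVec e₀ 0 := by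
    intro k
    induction k with
    | zero =>
      intro i
      have h1 : matWordR F i = 1 := by
        unfold matWordR
        rw [Subsingleton.elim i (fun j => 0)]
        simp
      rw [h1]
      simp [he₀]
    | succ k ih =>
      intro i
      rw [← Fin.snoc_init_self i, matWordR_snoc, ← Matrix.mulVec_mulVec, hmul0]
      split_ifs
      · exact mul_pos ha0 (ih _)
      · exact mul_pos ha3 (ih _)
  have hzero : ∀ (k : ℕ) (i : Fin k → Fin 2),
      (matWordR F (Fin.snoc i 0)).mulVec e₀ 0 = a₀ * (matWordR F i).mulVec e₀ 0 := by
    intro k i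
    rw [matWordR_snoc, ← Matrix.mulVec_mulVec, hmul0]
    simp
  -- zero-extension of words
  have hext : ∀ (m : ℕ) (i : Fin m → Fin 2) (k : ℕ),
      ∃ j : Fin (m + k) → Fin 2, dyadicVal j = dyadicVal i ∧
        (matWordR F j).mulVec e₀ 0 = a₀ ^ k * (matWordR F i).mulVec e₀ 0 := by
    intro m i k
    induction k with
    | zero => exact ⟨i, rfl, by ring_nf⟩
    | succ k ih =>
      obtain ⟨j, hj1, hj2⟩ := ih
      refine ⟨Fin.snoc j 0, ?_, ?_⟩
      · rw [dyadicVal_snoc]; simpa using hj1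
      · rw [hzero, hj2]; ring
  -- pick a dyadic interval inside U ∩ [0,1)
  obtain ⟨x, hxU, hx01⟩ := hne
  obtain ⟨ε, hε, hball⟩ := Metric.isOpen_iff.mp hU x hxU
  obtain ⟨m, hm⟩ := exists_pow_lt_of_lt_one hε (by norm_num : (2⁻¹:ℝ) < 1)
  obtain ⟨i, hxi1, hxi2⟩ := dyadic_cover x hx01 m
  have hIsub : Set.Ico (dyadicVal i) (dyadicVal i + (2⁻¹:ℝ)^m) ⊆ U ∩ Set.Ico (0:ℝ) 1 := by
    rintro y ⟨hy1, hy2⟩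
    refine ⟨hball ?_, dyadicVal_nonneg i |>.trans hy1, ?_⟩
    · rw [Metric.mem_ball, Real.dist_eq, abs_lt]
      constructor <;> linarith
    · have := dyadicVal_le i
      have hp : (0:ℝ) < (2⁻¹:ℝ)^m := by positivity
      linarith
  set c := (matWordR F i).mulVec e₀ 0 with hcdef
  have hc : 0 < c := hpos m i
  -- per-k upper estimate
  have hkey : ∀ k : ℕ, (a₀ ^ k * c) ^ 2 ≤ C * (2⁻¹:ℝ) ^ (m + k) := by
    intro k
    obtain ⟨j, hj1, hj2⟩ := hext m i k
    set I := Set.Ico (dyadicVal j) (dyadicVal j + (2⁻¹:ℝ)^(m+k)) with hIdef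
    have hsub2 : I ⊆ U ∩ Set.Ico (0:ℝ) 1 := by
      rintro y ⟨hy1, hy2⟩
      apply hIsub
      rw [hj1] at hy1 hy2
      have hle : (2⁻¹:ℝ)^(m+k) ≤ (2⁻¹:ℝ)^m :=
        pow_le_pow_of_le_one (by norm_num) (by norm_num) (Nat.le_add_right m k)
      exact ⟨hy1, by linarith⟩
    have hμ := hμ₀ (m + k) j
    have hμ2 : μ₀ I = ∫⁻ y in I, f y := by
      rw [hac, MeasureTheory.withDensity_apply _ measurableSet_Ico]
    have hae : ∀ᵐ y ∂(volume.restrict I), f y ≤ ENNReal.ofReal C := by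
      rw [ae_iff, Measure.restrict_apply' measurableSet_Ico]
      apply measure_mono_null _ hnull
      rintro y ⟨hy1, hy2⟩
      exact ⟨hsub2 hy2, not_le.mp hy1⟩
    have hvol : volume I = ENNReal.ofReal ((2⁻¹:ℝ)^(m+k)) := by
      rw [hIdef, Real.volume_Ico]
      congr 1
      ring
    have hbound : μ₀ I ≤ ENNReal.ofReal (C * (2⁻¹:ℝ)^(m+k)) := by
      rw [hμ2]
      calc ∫⁻ y in I, f y ≤ ∫⁻ _ in I, ENNReal.ofReal C := lintegral_mono_ae hae
        _ = ENNReal.ofReal C * volume I := by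
            rw [MeasureTheory.lintegral_const, Measure.restrict_apply_univ]
        _ = ENNReal.ofReal (C * (2⁻¹:ℝ)^(m+k)) := by
            rw [hvol, ← ENNReal.ofReal_mul hC.le]
    have hlow : ENNReal.ofReal ((a₀ ^ k * c) ^ 2) ≤ μ₀ I := by
      rw [hμ]
      apply ENNReal.ofReal_le_ofReal
      rw [← hj2]
      exact Finset.single_le_sum (f := fun n => ((matWordR F j).mulVec e₀ n) ^ 2)
        (fun n _ => sq_nonneg _) (Finset.mem_univ 0)
    have := hlow.trans hbound
    rwa [ENNReal.ofReal_le_ofReal_iff (by positivity)] at this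
  -- contradiction
  obtain ⟨k, hk⟩ := pow_unbounded_of_one_lt (C * (2⁻¹:ℝ)^m / c^2) h2a0
  have h1 := hkey k
  have h2k : (0:ℝ) < 2 ^ k := by positivity
  have e3 : (2:ℝ)^k * (2⁻¹)^k = 1 := by
    rw [← mul_pow]; norm_num
  have h2 : (2 * a₀^2)^k * c^2 ≤ C * (2⁻¹:ℝ)^m := by
    have h1' : (a₀^2)^k * c^2 ≤ C * (2⁻¹:ℝ)^m * (2⁻¹:ℝ)^k := by
      calc (a₀^2)^k * c^2 = (a₀^k * c)^2 := by ring
        _ ≤ C * (2⁻¹:ℝ)^(m+k) := h1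
        _ = C * (2⁻¹:ℝ)^m * (2⁻¹:ℝ)^k := by rw [pow_add]; ring
    have := mul_le_mul_of_nonneg_left h1' h2k.le
    calc (2 * a₀^2)^k * c^2 = 2^k * ((a₀^2)^k * c^2) := by rw [mul_pow]; ring
      _ ≤ 2^k * (C * (2⁻¹:ℝ)^m * (2⁻¹:ℝ)^k) := this
      _ = C * (2⁻¹:ℝ)^m * ((2:ℝ)^k * (2⁻¹)^k) := by ring
      _ = C * (2⁻¹:ℝ)^m := by rw [e3, mul_one]
  have h3 : C * (2⁻¹:ℝ)^m < (2 * a₀^2)^k * c^2 := by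
    rw [div_lt_iff₀ (by positivity)] at hk
    linarith
  linarith
end

section
/- There exists a unique ξ ∈ M such that ⟨w, ξ⟩ = 1 and Fξ = a·ξ. Moreover, for every x ∈ M, a^{−n}·F^n x converges to ⟨w, x⟩·ξ as n → ∞. -/
open Polynomial Matrix Filter Module ENNReal
open Polynomial Matrix

lemma charmatrix_sub_smul_one {n R : Type*} [Fintype n] [DecidableEq n] [CommRing R]
    (A : Matrix n n R) (μ : R) :
    charmatrix (A - μ • 1) = (charmatrix A).map (eval₂RingHom Polynomial.C (X + C μ)) := by
  ext i j
  by_cases h : i = j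
  · subst h
    simp [charmatrix_apply_eq, Matrix.sub_apply, Matrix.smul_apply, one_apply_eq, map_sub]
    ring
  · simp [charmatrix_apply_ne _ _ _ h, Matrix.sub_apply, Matrix.smul_apply, one_apply_ne h]

lemma matrix_charpoly_sub_smul_one {n R : Type*} [Fintype n] [DecidableEq n] [CommRing R]
    (A : Matrix n n R) (μ : R) :
    (A - μ • 1).charpoly = A.charpoly.comp (X + C μ) := by
  rw [Matrix.charpoly, Matrix.charpoly, charmatrix_sub_smul_one,
    ← RingHom.mapMatrix_apply, ← RingHom.map_det]
  simp [Polynomial.comp, eval₂RingHom, Polynomial.eval₂]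

lemma end_charpoly_sub_smul_one {K M : Type*} [Field K] [AddCommGroup M] [Module K M]
    [FiniteDimensional K M] (f : Module.End K M) (μ : K) :
    (f - μ • 1 : Module.End K M).charpoly = f.charpoly.comp (X + C μ) := by
  classical
  let b := Module.finBasis K M
  rw [← LinearMap.charpoly_toMatrix f b, ← LinearMap.charpoly_toMatrix (f - μ • 1 : Module.End K M) b,
    ← matrix_charpoly_sub_smul_one]
  congr 1
  simp [map_sub, _root_.map_smul, LinearMap.toMatrix_one]

lemma maxGenEigenspace_shift {K M : Type*} [Field K] [AddCommGroup M] [Module K M]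
    (f : Module.End K M) (μ : K) :
    f.maxGenEigenspace μ = (f - μ • 1 : Module.End K M).maxGenEigenspace 0 := by
  ext m
  simp [Module.End.mem_maxGenEigenspace]

lemma finrank_maxGenEigenspace_eq_rootMultiplicity {K M : Type*} [Field K] [AddCommGroup M]
    [Module K M] [FiniteDimensional K M] (f : Module.End K M) (μ : K) :
    Module.finrank K (f.maxGenEigenspace μ) = f.charpoly.rootMultiplicity μ := by
  rw [maxGenEigenspace_shift, LinearMap.finrank_maxGenEigenspace_zero_eq,
    end_charpoly_sub_smul_one, Polynomial.rootMultiplicity_eq_natTrailingDegree]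
open Filter Module ENNReal

lemma tendsto_pow_smul_zero_of_restrict {M : Type*} [NormedAddCommGroup M]
    [InnerProductSpace ℂ M] [FiniteDimensional ℂ M]
    (F : Module.End ℂ M) (K : Submodule ℂ M) (hFK : ∀ x ∈ K, F x ∈ K)
    (a : ℂ) (ha : a ≠ 0)
    (hlt : ∀ μ : ℂ, Module.End.HasEigenvalue (F.restrict hFK) μ → ‖μ‖ < ‖a‖) :
    ∀ y ∈ K, Tendsto (fun n : ℕ => (a ^ n)⁻¹ • (F ^ n) y) atTop (nhds 0) := by
  intro y hy
  rcases eq_or_ne y 0 with rfl | hy0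
  · simpa using tendsto_const_nhds
  haveI : Nontrivial K := ⟨⟨⟨y, hy⟩, 0, by simp [Subtype.ext_iff, hy0]⟩⟩
  set T : Module.End ℂ K := F.restrict hFK with hT
  set Tc : K →L[ℂ] K := LinearMap.toContinuousLinearMap T with hTc
  have hspec : ∀ z ∈ spectrum ℂ Tc, ‖z‖₊ < ‖a‖₊ := by
    intro z hz
    have hzT : z ∈ spectrum ℂ T := by
      rw [spectrum.mem_iff] at hz ⊢
      intro hU
      apply hz
      rw [ContinuousLinearMap.isUnit_iff_bijective]
      have hbij : Function.Bijective (algebraMap ℂ (Module.End ℂ K) z - T) :=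
        Module.End.isUnit_iff _ |>.mp hU
      have hcoe : ⇑(algebraMap ℂ (K →L[ℂ] K) z - Tc) = ⇑(algebraMap ℂ (Module.End ℂ K) z - T) := by
        funext x
        simp [Module.algebraMap_end_apply, Algebra.algebraMap_eq_smul_one,
          LinearMap.coe_toContinuousLinearMap', Tc]
      rw [hcoe]; exact hbij
    have := hlt z (Module.End.hasEigenvalue_iff_mem_spectrum.mpr hzT)
    rwa [← NNReal.coe_lt_coe, coe_nnnorm, coe_nnnorm]
  have hrad : spectralRadius ℂ Tc < (‖a‖₊ : ℝ≥0∞) :=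
    spectrum.spectralRadius_lt_of_forall_lt Tc hspec
  obtain ⟨r, hr1, hr2⟩ := ENNReal.lt_iff_exists_nnreal_btwn.mp hrad
  have htend := spectrum.pow_nnnorm_pow_one_div_tendsto_nhds_spectralRadius Tc
  have hev : ∀ᶠ n : ℕ in atTop, ((‖Tc ^ n‖₊ : ℝ≥0∞)) ^ (1 / (n : ℝ)) < (r : ℝ≥0∞) :=
    htend.eventually_lt_const hr1
  have hnorm : ∀ᶠ n : ℕ in atTop, ‖Tc ^ n‖ ≤ (r : ℝ) ^ n := by
    filter_upwards [hev, eventually_ge_atTop 1] with n hn hn1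
    have hn0 : (n : ℝ) ≠ 0 := by positivity
    have h1 : (‖Tc ^ n‖₊ : ℝ≥0∞) = (((‖Tc ^ n‖₊ : ℝ≥0∞)) ^ (1 / (n : ℝ))) ^ (n : ℝ) := by
      rw [← ENNReal.rpow_mul, one_div, inv_mul_cancel₀ hn0, ENNReal.rpow_one]
    have h2 : (‖Tc ^ n‖₊ : ℝ≥0∞) < (r : ℝ≥0∞) ^ (n : ℝ) := by
      rw [h1]
      exact ENNReal.rpow_lt_rpow hn (by positivity)
    rw [ENNReal.rpow_natCast, ← ENNReal.coe_pow, ENNReal.coe_lt_coe] at h2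
    have := h2.le
    rw [← NNReal.coe_le_coe, coe_nnnorm, NNReal.coe_pow] at this
    exact this
  have habs : (r : ℝ) < ‖a‖ := by
    rw [ENNReal.coe_lt_coe, ← NNReal.coe_lt_coe, coe_nnnorm] at hr2
    exact hr2
  have hapos : (0 : ℝ) < ‖a‖ := by simpa using norm_pos_iff.mpr ha
  have hbnd : ∀ᶠ n : ℕ in atTop,
      ‖(a ^ n)⁻¹ • (F ^ n) y‖ ≤ ‖y‖ * ((r : ℝ) / ‖a‖) ^ n := by
    filter_upwards [hnorm] with n hn
    have hFn : (F ^ n) y = ((T ^ n) ⟨y, hy⟩ : M) := by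
      rw [hT, Module.End.pow_restrict, LinearMap.restrict_apply]
    have hTcn : ((T ^ n) ⟨y, hy⟩ : K) = (Tc ^ n) ⟨y, hy⟩ := by
      rw [Module.End.pow_apply, show ⇑(Tc ^ n) = (⇑Tc)^[n] from FunLike.coe_pow_eq_iterate Tc n]
      simp [Tc, LinearMap.coe_toContinuousLinearMap']
    have hyk : ‖(⟨y, hy⟩ : K)‖ = ‖y‖ := rfl
    calc ‖(a ^ n)⁻¹ • (F ^ n) y‖ = ‖a‖⁻¹ ^ n * ‖(Tc ^ n) ⟨y, hy⟩‖ := by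
          rw [norm_smul, hFn, hTcn]
          simp [norm_inv, norm_pow, inv_pow]
      _ ≤ ‖a‖⁻¹ ^ n * (‖Tc ^ n‖ * ‖(⟨y, hy⟩ : K)‖) :=
          mul_le_mul_of_nonneg_left ((Tc ^ n).le_opNorm _) (by positivity)
      _ ≤ ‖a‖⁻¹ ^ n * ((r : ℝ) ^ n * ‖y‖) := by
          rw [hyk]; gcongr
      _ = ‖y‖ * ((r : ℝ) / ‖a‖) ^ n := by
          rw [div_pow, div_eq_mul_inv, ← inv_pow]; ring
  have hc1 : (r : ℝ) / ‖a‖ < 1 := (div_lt_one hapos).mpr habs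
  have hc0 : (0 : ℝ) ≤ (r : ℝ) / ‖a‖ := by positivity
  have hgt : Tendsto (fun n : ℕ => ‖y‖ * ((r : ℝ) / ‖a‖) ^ n) atTop (nhds 0) := by
    have := (tendsto_pow_atTop_nhds_zero_of_lt_one hc0 hc1).const_mul ‖y‖
    simpa using this
  exact squeeze_zero_norm' hbnd hgt



open Module Filter

/-- Let `M` be a nonzero finite-dimensional complex inner product
space, `F : M → M` linear, and `a ≠ 0` an eigenvalue of `F` of algebraic multiplicity
one dominating all other eigenvalues in modulus, with a unit vector `w` satisfying
`F* w = conj a • w`.  Then there is a unique `ξ` with `⟪w, ξ⟫ = 1` and `F ξ = a ξ`;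
moreover `a^{−n} Fⁿ x → ⟪w, x⟫ ξ` for every `x`. -/
theorem cuntz_wavelet_stmt18 {M : Type*} [NormedAddCommGroup M]
    [InnerProductSpace ℂ M] [FiniteDimensional ℂ M] [Nontrivial M]
    (F : Module.End ℂ M) (a : ℂ) (ha : a ≠ 0)
    (hev : Module.End.HasEigenvalue F a)
    (hdom : ∀ lam : ℂ, Module.End.HasEigenvalue F lam → lam ≠ a →
      ‖lam‖ < ‖a‖)
    (hmult : (LinearMap.charpoly F).rootMultiplicity a = 1)
    (w : M) (hw : ‖w‖ = 1)
    (hadj : LinearMap.adjoint (F : M →ₗ[ℂ] M) w = (starRingEnd ℂ) a • w) :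
    (∃! ξ : M, (inner ℂ w ξ : ℂ) = 1 ∧ F ξ = a • ξ) ∧
    (∀ ξ : M, ((inner ℂ w ξ : ℂ) = 1 ∧ F ξ = a • ξ) →
      ∀ x : M, Filter.Tendsto (fun n : ℕ => (a ^ n)⁻¹ • (F ^ n) x)
        Filter.atTop (nhds ((inner ℂ w x : ℂ) • ξ))) := by
  classical
  obtain ⟨v, hv⟩ := hev.exists_hasEigenvector
  set E := F.maxGenEigenspace a with hE
  have hfE : finrank ℂ E = 1 := by
    rw [hE, finrank_maxGenEigenspace_eq_rootMultiplicity]; exact hmult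
  have h1 : (ℂ ∙ v) ≤ F.eigenspace a :=
    (Submodule.span_singleton_le_iff_mem _ _).mpr hv.1
  have h2 : F.eigenspace a ≤ E := (F.genEigenspace a).monotone le_top
  have hspanE : (ℂ ∙ v) = E :=
    Submodule.eq_of_le_of_finrank_le (h1.trans h2)
      (by rw [hfE, finrank_span_singleton hv.2])
  have heig : F.eigenspace a = E := le_antisymm h2 (hspanE ▸ h1)
  set K : Submodule ℂ M := ⨆ (μ : ℂ) (_ : μ ≠ a), F.maxGenEigenspace μ with hK
  have hsup : E ⊔ K = ⊤ := by
    rw [eq_top_iff, ← Module.End.iSup_maxGenEigenspace_eq_top F]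
    refine iSup_le fun μ => ?_
    by_cases hμ : μ = a
    · subst hμ; exact le_sup_left
    · exact le_trans (le_iSup₂ (f := fun μ _ => F.maxGenEigenspace μ) μ hμ) le_sup_right
  have hdisj : Disjoint E K := F.independent_maxGenEigenspace a
  have hFK : ∀ x ∈ K, F x ∈ K := by
    intro x hx
    have hmap : Submodule.map F K ≤ K := by
      rw [hK, Submodule.map_iSup]
      refine iSup_le fun μ => ?_
      rw [Submodule.map_iSup]
      refine iSup_le fun hμ => le_trans ?_ (le_iSup₂ (f := fun μ _ => F.maxGenEigenspace μ) μ hμ)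
      exact Submodule.map_le_iff_le_comap.mpr
        (fun y hy => F.mapsTo_maxGenEigenspace_of_comm rfl μ hy)
    exact hmap ⟨x, hx, rfl⟩
  -- inner product facts
  have key : ∀ y : M, (inner ℂ w (F y) : ℂ) = a * inner ℂ w y := by
    intro y
    have := LinearMap.adjoint_inner_left (F : M →ₗ[ℂ] M) y w
    rw [hadj] at this
    rw [show F y = (F : M →ₗ[ℂ] M) y from rfl, ← this, inner_smul_left]
    simp
  have step : ∀ (μ : ℂ) (k : ℕ) (y : M),
      (inner ℂ w (((F - μ • 1) ^ k) y) : ℂ) = (a - μ) ^ k * inner ℂ w y := by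
    intro μ k
    induction k with
    | zero => intro y; simp
    | succ k ih =>
      intro y
      rw [pow_succ, Module.End.mul_apply, ih ((F - μ • 1) y)]
      have : (inner ℂ w ((F - μ • 1) y) : ℂ) = (a - μ) * inner ℂ w y := by
        simp only [LinearMap.sub_apply, LinearMap.smul_apply, Module.End.one_apply]
        rw [inner_sub_right, key, inner_smul_right]
        ring
      rw [this]; ring
  have hwK : ∀ x ∈ K, (inner ℂ w x : ℂ) = 0 := by
    have : K ≤ LinearMap.ker (innerₛₗ ℂ w) := by
      refine iSup₂_le fun μ hμ => fun x hx => ?_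
      obtain ⟨k, hk⟩ := (F.mem_maxGenEigenspace μ x).mp hx
      have := step μ k x
      rw [hk, inner_zero_right] at this
      have hμa : (a - μ) ≠ 0 := sub_ne_zero.mpr (Ne.symm hμ)
      rw [LinearMap.mem_ker]
      have h0 : (a - μ) ^ k * (inner ℂ w x : ℂ) = 0 := this.symm
      simpa [innerₛₗ_apply_apply] using (mul_eq_zero.mp h0).resolve_left (pow_ne_zero k hμa)
    intro x hx
    simpa [innerₛₗ_apply_apply] using this hx
  have hwv : (inner ℂ w v : ℂ) ≠ 0 := by
    intro h0
    have hww : (inner ℂ w w : ℂ) = 0 := by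
      have hmem : w ∈ E ⊔ K := hsup ▸ Submodule.mem_top
      obtain ⟨u, hu, z, hz, huz⟩ := Submodule.mem_sup.mp hmem
      obtain ⟨c, rfl⟩ := Submodule.mem_span_singleton.mp (hspanE ▸ hu : u ∈ (ℂ ∙ v))
      have hc := congrArg (fun t => (inner ℂ w t : ℂ)) huz.symm
      rw [hc, inner_add_right, inner_smul_right, h0, hwK z hz]
      ring
    have : w = 0 := inner_self_eq_zero.mp hww
    rw [this, norm_zero] at hw
    exact one_ne_zero hw.symm
  set ξ₀ : M := (inner ℂ w v : ℂ)⁻¹ • v with hξ₀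
  have hξ₀prop : (inner ℂ w ξ₀ : ℂ) = 1 ∧ F ξ₀ = a • ξ₀ := by
    constructor
    · rw [hξ₀, inner_smul_right, inv_mul_cancel₀ hwv]
    · rw [hξ₀, LinearMap.map_smul, hv.apply_eq_smul, smul_comm]
  have huniq : ∀ ξ' : M, ((inner ℂ w ξ' : ℂ) = 1 ∧ F ξ' = a • ξ') → ξ' = ξ₀ := by
    rintro ξ' ⟨h1', h2'⟩
    have : ξ' ∈ (ℂ ∙ v) := by
      rw [hspanE, ← heig]
      exact Module.End.mem_eigenspace_iff.mpr h2'
    obtain ⟨c, rfl⟩ := Submodule.mem_span_singleton.mp this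
    rw [inner_smul_right] at h1'
    have hc : c = (inner ℂ w v : ℂ)⁻¹ := by
      field_simp at h1' ⊢
      linear_combination h1'
    rw [hc, hξ₀]
  -- eigenvalue bound on restriction
  have hlt : ∀ μ : ℂ, Module.End.HasEigenvalue (F.restrict hFK) μ → ‖μ‖ < ‖a‖ := by
    intro μ hμ
    obtain ⟨z0, hz0⟩ := hμ.exists_hasEigenvector
    have hz0M : F (z0 : M) = μ • (z0 : M) := by
      have := hz0.apply_eq_smul
      have h2 := congrArg (Subtype.val) this
      rw [LinearMap.restrict_apply] at h2
      exact h2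
    have hz0ne : (z0 : M) ≠ 0 := fun h => hz0.2 (Subtype.ext h)
    have hFev : Module.End.HasEigenvalue F μ :=
      Module.End.hasEigenvalue_of_hasEigenvector ⟨Module.End.mem_eigenspace_iff.mpr hz0M, hz0ne⟩
    have hμa : μ ≠ a := by
      rintro rfl
      have hmem : (z0 : M) ∈ E := heig ▸ Module.End.mem_eigenspace_iff.mpr hz0M
      exact hz0ne (Submodule.mem_bot ℂ |>.mp (hdisj.le_bot ⟨hmem, z0.2⟩))
    have := hdom μ hFev hμa
    simpa using this
  have hconv0 : ∀ y ∈ K, Tendsto (fun n : ℕ => (a ^ n)⁻¹ • (F ^ n) y) atTop (nhds 0) :=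
    tendsto_pow_smul_zero_of_restrict F K hFK a ha hlt
  refine ⟨⟨ξ₀, hξ₀prop, huniq⟩, ?_⟩
  rintro ξ' ⟨h1', h2'⟩ x
  have hξ'eq : ξ' = ξ₀ := huniq ξ' ⟨h1', h2'⟩
  subst hξ'eq
  -- decompose x
  have : x ∈ E ⊔ K := hsup ▸ Submodule.mem_top
  obtain ⟨u, hu, z, hz, huz⟩ := Submodule.mem_sup.mp this
  obtain ⟨c, rfl⟩ := Submodule.mem_span_singleton.mp (hspanE ▸ hu : u ∈ (ℂ ∙ v))
  have hinner : (inner ℂ w x : ℂ) = c * inner ℂ w v := by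
    rw [← huz, inner_add_right, hwK z hz, inner_smul_right]; ring
  have huξ : c • v = (inner ℂ w x : ℂ) • ξ₀ := by
    rw [hinner, hξ₀, smul_smul]
    rw [mul_assoc, mul_inv_cancel₀ hwv, mul_one]
  have hFvn : ∀ n : ℕ, (F ^ n) (c • v) = a ^ n • (c • v) := by
    intro n
    induction n with
    | zero => simp
    | succ n ih =>
      rw [pow_succ', Module.End.mul_apply, ih, LinearMap.map_smul, LinearMap.map_smul,
        hv.apply_eq_smul]
      rw [smul_smul, smul_smul, smul_smul, pow_succ]
      ring_nf
  have heqfun : ∀ n : ℕ, (a ^ n)⁻¹ • (F ^ n) x =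
      c • v + (a ^ n)⁻¹ • (F ^ n) z := by
    intro n
    rw [← huz, map_add, smul_add, hFvn n, inv_smul_smul₀ (pow_ne_zero n ha)]
  have := (tendsto_const_nhds (x := c • v) (f := atTop)).add (hconv0 z hz)
  rw [add_zero] at this
  rw [huξ] at this
  exact this.congr fun n => by rw [heqfun n, huξ]
end
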